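/- Let γ : ℝ → ℝ be continuous with s·γ(s) ≥ 0 for all s, and suppose there exists a strictly increasing continuous function α : ℝ≥0 → ℝ≥0 with α(0) = 0 such that |γ(s)| ≥ α(|s|) for all s. Then for every r > 0, ρ(r) := (1/(2π)) ∫₀^{2π} γ(r·sin φ)·sin φ dφ > 0. -/
import Mathlib


open Real

noncomputable def rho (γ : ℝ → ℝ) (r : ℝ) : ℝ :=
  (1 / (2 * π)) * ∫ φ in (0:ℝ)..(2 * π), γ (r * Real.sin φ) * Real.sin φ

theorem stmt_4 (γ : ℝ → ℝ) (hγ : Continuous γ)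
    (hsgn : ∀ s : ℝ, 0 ≤ s * γ s)
    (α : NNReal → NNReal) (hα_mono : StrictMono α) (hα_cont : Continuous α)
    (hα0 : α 0 = 0)
    (hbound : ∀ s : ℝ, (α (Real.nnabs s) : ℝ) ≤ |γ s|)
    (r : ℝ) (hr : 0 < r) :
    0 < rho γ r := by
  have hπ : (0:ℝ) < π := Real.pi_pos
  set f : ℝ → ℝ := fun φ => γ (r * Real.sin φ) * Real.sin φ with hf
  have hfc : Continuous f :=
    (hγ.comp (continuous_const.mul Real.continuous_sin)).mul Real.continuous_sin
  have hnn : ∀ φ, 0 ≤ f φ := by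
    intro φ
    have h := hsgn (r * Real.sin φ)
    simp only [hf]
    nlinarith
  have hpos : ∀ s : ℝ, 0 < s → 0 < γ s := by
    intro s hs
    have hna : (0:NNReal) < Real.nnabs s := by
      rw [← NNReal.coe_pos, Real.coe_nnabs]
      exact abs_pos.mpr hs.ne'
    have h1 : (0:NNReal) < α (Real.nnabs s) := by
      rw [← hα0]; exact hα_mono hna
    have h2 : (0:ℝ) < |γ s| := lt_of_lt_of_le (by exact_mod_cast h1) (hbound s)
    have h3 := hsgn s
    rcases abs_cases (γ s) with ⟨he, _⟩ | ⟨he, _⟩ <;> nlinarith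
  have hposOn : ∀ φ ∈ Set.Ioo (0:ℝ) π, 0 < f φ := by
    intro φ hφ
    have hsin : 0 < Real.sin φ := Real.sin_pos_of_pos_of_lt_pi hφ.1 hφ.2
    exact mul_pos (hpos _ (mul_pos hr hsin)) hsin
  have hI1 : 0 < ∫ φ in (0:ℝ)..π, f φ :=
    intervalIntegral.intervalIntegral_pos_of_pos_on (hfc.intervalIntegrable 0 π) hposOn hπ
  have hI2 : 0 ≤ ∫ φ in (π:ℝ)..(2*π), f φ :=
    intervalIntegral.integral_nonneg (by linarith) (fun x _ => hnn x)
  have hsplit : (∫ φ in (0:ℝ)..π, f φ) + (∫ φ in (π:ℝ)..(2*π), f φ)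
      = ∫ φ in (0:ℝ)..(2*π), f φ :=
    intervalIntegral.integral_add_adjacent_intervals
      (hfc.intervalIntegrable 0 π) (hfc.intervalIntegrable π (2*π))
  have hI : 0 < ∫ φ in (0:ℝ)..(2*π), f φ := by
    rw [← hsplit]; linarith
  have hc : (0:ℝ) < 1 / (2 * π) := by positivity
  exact mul_pos hc hI
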